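/- For every positive integer m and every real v with −1 < v < 1, the m-th derivative of v ↦ (1 − v²)^{m − 1/2} satisfies d^m/dv^m[(1 − v²)^{m−1/2}] = (−1)^m · 2^m · m! · (1 − v²)^{−1/2} · P_m^{(−1/2,−1/2)}(v). -/

import Mathlib

open Real MeasureTheory

/-- Generalized binomial coefficient `C(a, j) = a(a-1)⋯(a-j+1)/j!`. -/
noncomputable def genBinom (a : ℝ) (j : ℕ) : ℝ :=
  (∏ i ∈ Finset.range j, (a - i)) / (Nat.factorial j)

/-- Jacobi polynomial `P_ℓ^{(α,β)}(x)`. -/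
noncomputable def jacobiP (α β : ℝ) (l : ℕ) (x : ℝ) : ℝ :=
  ∑ k ∈ Finset.range (l + 1),
    genBinom ((l : ℝ) + α) (l - k) * genBinom ((l : ℝ) + β) k *
      ((x - 1) / 2) ^ k * ((x + 1) / 2) ^ (l - k)

/-- Gegenbauer (ultraspherical) polynomial `C_m^{(λ)}(x)`. -/
noncomputable def gegenbauerC (m : ℕ) (lam : ℝ) (x : ℝ) : ℝ :=
  ∑ k ∈ Finset.range (m / 2 + 1),
    (-1 : ℝ) ^ k *
      (Real.Gamma (lam + m - k) /
        (Real.Gamma lam * (Nat.factorial k) * (Nat.factorial (m - 2 * k)))) *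
      (2 * x) ^ (m - 2 * k)

/-- Pochhammer symbol `(q)_k = q(q+1)⋯(q+k-1)`. -/
noncomputable def poch (q : ℝ) (k : ℕ) : ℝ := ∏ i ∈ Finset.range k, (q + i)

/-- Terminating Gauss hypergeometric function `₂F₁(-m, b; c; z)`. -/
noncomputable def hyp2F1 (m : ℕ) (b c z : ℝ) : ℝ :=
  ∑ k ∈ Finset.range (m + 1),
    poch (-(m : ℝ)) k * poch b k / (poch c k * (Nat.factorial k)) * z ^ k

/-- The operator `(Df)(u) = -(1/sin u) f'(u)`. -/
noncomputable def Dop (f : ℝ → ℝ) : ℝ → ℝ := fun u => -(1 / Real.sin u) * deriv f u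

private noncomputable def Aprod (a : ℝ) (k : ℕ) : ℝ := ∏ i ∈ Finset.range k, (a - i)

private lemma pascal_sum (n : ℕ) (G : ℕ → ℝ) :
    ∑ k ∈ Finset.range (n+1), (n.choose k : ℝ) * (G k + G (k+1))
    = ∑ k ∈ Finset.range (n+2), ((n+1).choose k : ℝ) * G k := by
  rw [Finset.sum_range_succ' (fun k => ((n+1).choose k : ℝ) * G k)]
  simp only [Nat.choose_succ_succ, Nat.cast_add, Nat.choose_zero_right]
  have e1 := Finset.sum_range_succ' (fun k => (n.choose k : ℝ) * G k) (n+1)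
  have e2 := Finset.sum_range_succ (fun k => (n.choose k : ℝ) * G k) (n+1)
  simp only [Nat.choose_succ_self, Nat.cast_zero, zero_mul, add_zero] at e2
  simp only [mul_add, add_mul, Finset.sum_add_distrib]
  simp only [Nat.succ_eq_add_one, Nat.choose_zero_right, Nat.cast_one, one_mul] at e1 ⊢
  rw [e2] at e1
  linarith [e1]

private lemma hasDerivAt_term (p q c : ℝ) {x : ℝ} (h1 : 0 < 1 - x) (h2 : 0 < 1 + x) :
    HasDerivAt (fun y => c * ((1-y)^p * (1+y)^q))
      (c * (-(p * (1-x)^(p-1)) * (1+x)^q + (1-x)^p * (q * (1+x)^(q-1)))) x := by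
  have hd1 : HasDerivAt (fun y : ℝ => (1-y)^p) (-(p * (1-x)^(p-1))) x := by
    have h := (Real.hasDerivAt_rpow_const (p := p) (Or.inl h1.ne')).comp x
      ((hasDerivAt_const x (1:ℝ)).sub (hasDerivAt_id x))
    simpa [Function.comp_def] using h
  have hd2 : HasDerivAt (fun y : ℝ => (1+y)^q) (q * (1+x)^(q-1)) x := by
    have h := (Real.hasDerivAt_rpow_const (p := q) (Or.inl h2.ne')).comp x
      ((hasDerivAt_const x (1:ℝ)).add (hasDerivAt_id x))
    simpa [Function.comp_def] using h
  exact (hd1.mul hd2).const_mul c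

private lemma keyF (a : ℝ) (n : ℕ) : ∀ x ∈ Set.Ioo (-1:ℝ) 1,
    iteratedDeriv n (fun w => (1-w)^a * (1+w)^a) x
    = ∑ k ∈ Finset.range (n+1), (n.choose k : ℝ) *
        ((-1:ℝ)^k * Aprod a k * Aprod a (n-k) *
          ((1-x)^(a - (k:ℝ)) * (1+x)^(a - ((n-k : ℕ) : ℝ)))) := by
  induction n with
  | zero => intro x _; simp [Aprod]
  | succ n ih =>
    intro x hx
    obtain ⟨hx1, hx2⟩ := hx
    have h1 : 0 < 1 - x := by linarith
    have h2 : 0 < 1 + x := by linarith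
    rw [iteratedDeriv_succ]
    have heq : iteratedDeriv n (fun w => (1-w)^a * (1+w)^a)
        =ᶠ[nhds x] (fun y => ∑ k ∈ Finset.range (n+1), (n.choose k : ℝ) *
          ((-1:ℝ)^k * Aprod a k * Aprod a (n-k) *
            ((1-y)^(a - (k:ℝ)) * (1+y)^(a - ((n-k:ℕ):ℝ))))) := by
      filter_upwards [isOpen_Ioo.mem_nhds ⟨hx1, hx2⟩] with y hy using ih y hy
    rw [heq.deriv_eq]
    set G : ℕ → ℝ := fun k => (-1:ℝ)^k * Aprod a k * Aprod a (n+1-k) *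
        ((1-x)^(a - (k:ℝ)) * (1+x)^(a - ((n+1-k:ℕ):ℝ))) with hG
    have hD : HasDerivAt (fun y => ∑ k ∈ Finset.range (n+1), (n.choose k : ℝ) *
          ((-1:ℝ)^k * Aprod a k * Aprod a (n-k) *
            ((1-y)^(a - (k:ℝ)) * (1+y)^(a - ((n-k:ℕ):ℝ)))))
        (∑ k ∈ Finset.range (n+1), (n.choose k : ℝ) * (G k + G (k+1))) x := by
      apply HasDerivAt.fun_sum
      intro k hk
      have hk' : k ≤ n := Nat.lt_succ_iff.mp (Finset.mem_range.mp hk)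
      have hterm := hasDerivAt_term (a - (k:ℝ)) (a - ((n-k:ℕ):ℝ))
        ((n.choose k : ℝ) * ((-1:ℝ)^k * Aprod a k * Aprod a (n-k))) h1 h2
      have hfun : (fun y => (n.choose k : ℝ) * ((-1:ℝ)^k * Aprod a k * Aprod a (n-k)) *
            ((1-y)^(a - (k:ℝ)) * (1+y)^(a - ((n-k:ℕ):ℝ))))
          = (fun y => (n.choose k : ℝ) * ((-1:ℝ)^k * Aprod a k * Aprod a (n-k) *
            ((1-y)^(a - (k:ℝ)) * (1+y)^(a - ((n-k:ℕ):ℝ))))) := by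
        funext y; ring
      rw [hfun] at hterm
      refine hterm.congr_deriv ?_
      have e1 : Aprod a (k+1) = Aprod a k * (a - (k:ℝ)) := Finset.prod_range_succ _ _
      have e2 : n + 1 - (k+1) = n - k := by omega
      have e3 : n + 1 - k = (n-k) + 1 := by omega
      have e4 : Aprod a ((n-k)+1) = Aprod a (n-k) * (a - ((n-k:ℕ):ℝ)) :=
        Finset.prod_range_succ _ _
      have c1 : a - ((k+1:ℕ):ℝ) = a - (k:ℝ) - 1 := by push_cast; ring
      have c2 : a - (((n-k)+1:ℕ):ℝ) = a - ((n-k:ℕ):ℝ) - 1 := by push_cast; ring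
      simp only [hG, e2, e3, e1, e4, c1, c2, pow_succ]
      ring
    rw [hD.deriv, pascal_sum n G]

theorem statement_9 (m : ℕ) (hm : 0 < m) (v : ℝ) (hv1 : -1 < v) (hv2 : v < 1) :
    iteratedDeriv m (fun w : ℝ => (1 - w ^ 2) ^ ((m : ℝ) - 1 / 2)) v
      = (-1 : ℝ) ^ m * 2 ^ m * (Nat.factorial m : ℝ) *
          (1 - v ^ 2) ^ (-(1 / 2) : ℝ) * jacobiP (-(1 / 2)) (-(1 / 2)) m v := by
  have h1 : 0 < 1 - v := by linarith
  have h2 : 0 < 1 + v := by linarith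
  set a : ℝ := (m:ℝ) - 1/2 with ha
  have heq : (fun w : ℝ => (1 - w^2) ^ ((m:ℝ) - 1/2))
      =ᶠ[nhds v] (fun w => (1-w)^a * (1+w)^a) := by
    filter_upwards [isOpen_Ioo.mem_nhds (⟨hv1, hv2⟩ : v ∈ Set.Ioo (-1:ℝ) 1)] with w hw
    have hw1 : (0:ℝ) ≤ 1 - w := by linarith [hw.2]
    have hw2 : (0:ℝ) ≤ 1 + w := by linarith [hw.1]
    rw [show (1:ℝ) - w^2 = (1-w)*(1+w) by ring, Real.mul_rpow hw1 hw2]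
  rw [heq.iteratedDeriv_eq m, keyF a m v ⟨hv1, hv2⟩, jacobiP, Finset.mul_sum,
    ← Finset.sum_range_reflect]
  simp only [Nat.add_sub_cancel]
  refine Finset.sum_congr rfl fun k hk => ?_
  have hkm : k ≤ m := Nat.lt_succ_iff.mp (Finset.mem_range.mp hk)
  have hmm : m - (m - k) = k := by omega
  have ck : ((m-k:ℕ):ℝ) = (m:ℝ) - (k:ℝ) := by push_cast [hkm]; ring
  have hma : (m:ℝ) + -(1/2) = a := by rw [ha]; ring
  have hgen : ∀ j, genBinom a j = Aprod a j / (Nat.factorial j : ℝ) := fun j => rfl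
  have E1 : (1-v)^(a - ((m-k:ℕ):ℝ)) = (1-v)^k * (1-v)^(-(1/2):ℝ) := by
    rw [← Real.rpow_natCast (1-v) k, ← Real.rpow_add h1]
    congr 1; rw [ck, ha]; ring
  have E2 : (1+v)^(a - ((k:ℕ):ℝ)) = (1+v)^(m-k) * (1+v)^(-(1/2):ℝ) := by
    rw [← Real.rpow_natCast (1+v) (m-k), ← Real.rpow_add h2]
    congr 1; rw [ck, ha]; ring
  have E3 : (1-v^2)^(-(1/2):ℝ) = (1-v)^(-(1/2):ℝ) * (1+v)^(-(1/2):ℝ) := by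
    rw [show (1:ℝ) - v^2 = (1-v)*(1+v) by ring, Real.mul_rpow h1.le h2.le]
  have E45 : ((v-1)/2)^k * ((v+1)/2)^(m-k)
      = (-1:ℝ)^k * ((1-v)^k * (1+v)^(m-k)) / 2^m := by
    rw [div_pow, div_pow, show (v-1:ℝ) = -1 * (1-v) by ring, mul_pow,
      div_mul_div_comm, ← pow_add, show k + (m-k) = m from by omega]
    ring
  have E6 : (-1:ℝ)^(m-k) = (-1:ℝ)^m * (-1:ℝ)^k := by
    rw [← pow_add, show m + k = (m-k) + 2*k from by omega, pow_add, pow_mul]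
    norm_num
  have E7 : ((m.choose (m-k)):ℝ) = (Nat.factorial m : ℝ) /
      ((Nat.factorial (m-k) : ℝ) * (Nat.factorial k : ℝ)) := by
    rw [Nat.cast_choose ℝ (Nat.sub_le m k), hmm]
  have f1 : ((Nat.factorial k : ℕ) : ℝ) ≠ 0 := Nat.cast_ne_zero.mpr (Nat.factorial_ne_zero k)
  have f2 : ((Nat.factorial (m-k) : ℕ) : ℝ) ≠ 0 := Nat.cast_ne_zero.mpr (Nat.factorial_ne_zero _)
  have f3 : (2:ℝ)^m ≠ 0 := by positivity
  rw [hmm, hma, hgen, hgen, E1, E2, E3, E6, E7]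
  field_simp
  have e8 : (2:ℝ)^k * 2^(m-k) = 2^m := by rw [← pow_add]; congr 1; omega
  have e9 : ((v:ℝ)-1)^k = (-1)^k * (1-v)^k := by
    rw [show (v-1:ℝ) = -1*(1-v) by ring, mul_pow]
  rw [mul_assoc _ (((v - 1) / 2) ^ k), E45, mul_assoc _ ((2:ℝ)^m), mul_div_cancel₀ _ f3]
  ring
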